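/- Let p > 1, Θ₀ > 0, and let B(y) = ( C − ((p−1)/p) · y²/(2σ) )_+^{1/(p−1)} be a Barenblatt profile with C, σ > 0 such that ∫_ℝ B dy = 1, ∫_ℝ y² B dy = Θ₀, and σ = √Θ₀ / ( p √(2 I_p(B)) ). Then on the open set {y : B(y) > 0} one has p · d/dy (ln_p B)(y) = −y/σ, and B is a pointwise steady state of the nonlocal rescaled equation there, i.e. (1/I_p(B)) · d²/dy²( B^p · d²/dy²(ln_p B) )(y) = (2p/Θ₀) · d/dy( y B(y) ) for every y with B(y) > 0. -/

import Mathlib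

open MeasureTheory Filter Set
open Topology

/-- The `p`-logarithm: `ln_p u = (u^(p-1) - 1)/(p-1)` for `p ≠ 1`, and `ln u` for `p = 1`. -/
noncomputable def lnp (p : ℝ) (u : ℝ) : ℝ :=
  if p = 1 then Real.log u else (u ^ (p - 1) - 1) / (p - 1)

/-- Generalized Fisher information `I_p(f) = (1/2) ∫ f ((ln_p f)')²`. -/
noncomputable def fisherP (p : ℝ) (f : ℝ → ℝ) : ℝ :=
  (1 / 2) * ∫ x : ℝ, f x * (deriv (fun y => lnp p (f y)) x) ^ 2

/-- Rényi entropy of order `p ≠ 1`: `R_p(f) = (1/(1-p)) ln ∫ f^p`. -/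
noncomputable def renyi (p : ℝ) (f : ℝ → ℝ) : ℝ :=
  (1 / (1 - p)) * Real.log (∫ x : ℝ, f x ^ p)

/-- `f`, together with all its derivatives, decays faster than any polynomial at infinity. -/
def RapidDecay (f : ℝ → ℝ) : Prop :=
  ∀ n k : ℕ, Tendsto (fun x => x ^ n * iteratedDeriv k f x) (cocompact ℝ) (nhds 0)

/-- with `σ = √Θ₀/(p√(2 I_p(B)))`, the Barenblatt profile satisfies
`p (ln_p B)' = −y/σ` on its positivity set, and is a pointwise steady state of the
nonlocal rescaled equation there. -/
theorem barenblatt_steady_state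
    (p Θ₀ C σ : ℝ) (hp : 1 < p) (hΘ₀ : 0 < Θ₀) (hC : 0 < C) (hσ : 0 < σ)
    (B : ℝ → ℝ)
    (hB : ∀ y, B y = (max (C - (p - 1) / p * y ^ 2 / (2 * σ)) 0) ^ (1 / (p - 1)))
    (hBmass : (∫ y : ℝ, B y) = 1)
    (hBmom : (∫ y : ℝ, y ^ 2 * B y) = Θ₀)
    (hσdef : σ = Real.sqrt Θ₀ / (p * Real.sqrt (2 * fisherP p B))) :
    ∀ y : ℝ, 0 < B y →
      p * deriv (fun z => lnp p (B z)) y = -(y / σ) ∧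
      (1 / fisherP p B) *
          deriv (deriv (fun z =>
            (B z) ^ p * deriv (deriv (fun w => lnp p (B w))) z)) y =
        (2 * p / Θ₀) * deriv (fun z => z * B z) y := by
  intro y hy
  have hp0 : p ≠ 0 := by linarith
  have hp1 : p - 1 ≠ 0 := by linarith
  have hpne : p ≠ 1 := by linarith
  have hσ0 : σ ≠ 0 := ne_of_gt hσ
  have hΘ0 : Θ₀ ≠ 0 := ne_of_gt hΘ₀
  set F : ℝ → ℝ := fun z => C - (p - 1) / p * z ^ 2 / (2 * σ) with hFdef
  -- positivity of F at y
  have hFy : 0 < F y := by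
    by_contra h
    push_neg at h
    have hmax : max (F y) 0 = 0 := max_eq_right h
    rw [hB y] at hy
    rw [hmax, Real.zero_rpow (one_div_ne_zero hp1)] at hy
    exact lt_irrefl 0 hy
  have hFcont : Continuous F := by
    apply Continuous.sub continuous_const
    exact (continuous_const.mul (continuous_pow 2)).div_const _
  have h0 : ∀ᶠ z in 𝓝 y, 0 < F z :=
    (hFcont.continuousAt (x := y)).eventually (eventually_gt_nhds hFy)
  have hBF : ∀ᶠ z in 𝓝 y, B z = F z ^ (1 / (p - 1)) :=
    h0.mono fun z hz => by rw [hB z, max_eq_left hz.le]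
  -- derivative of F
  have hF' : ∀ z : ℝ, HasDerivAt F (-((p - 1) / p * (2 * z ^ 1) / (2 * σ))) z := by
    intro z
    have h1 : HasDerivAt (fun x : ℝ => x ^ 2) ((2 : ℕ) * z ^ 1) z := by
      simpa using hasDerivAt_pow 2 z
    have := ((h1.const_mul ((p - 1) / p)).div_const (2 * σ)).const_sub C
    simpa [hFdef, mul_assoc] using this
  -- lnp ∘ B agrees locally with an explicit function
  have h1 : (fun z => lnp p (B z)) =ᶠ[𝓝 y] fun z => (F z - 1) / (p - 1) :=
    h0.mono fun z hz => by
      show lnp p (B z) = (F z - 1) / (p - 1)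
      rw [hB z, max_eq_left hz.le]
      simp only [lnp, if_neg hpne]
      rw [← Real.rpow_mul hz.le, one_div, inv_mul_cancel₀ hp1, Real.rpow_one]
  have h3 : ∀ z : ℝ, deriv (fun w => (F w - 1) / (p - 1)) z = -(z / (p * σ)) := by
    intro z
    rw [(((hF' z).sub_const 1).div_const (p - 1)).deriv]
    field_simp
  have h2 : deriv (fun z => lnp p (B z)) =ᶠ[𝓝 y] fun z => -(z / (p * σ)) :=
    h1.deriv.trans (Eventually.of_forall h3)
  have part1 : p * deriv (fun z => lnp p (B z)) y = -(y / σ) := by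
    rw [h2.self_of_nhds]
    field_simp
  refine ⟨part1, ?_⟩
  -- second derivative of lnp ∘ B is locally constant
  have h4 : deriv (deriv (fun z => lnp p (B z))) =ᶠ[𝓝 y] fun _ => -(1 / (p * σ)) := by
    refine h2.deriv.trans (Eventually.of_forall fun z => ?_)
    have : HasDerivAt (fun w : ℝ => -(w / (p * σ))) (-(1 / (p * σ))) z := by
      simpa using ((hasDerivAt_id z).div_const (p * σ)).fun_neg
    exact this.deriv
  -- the inner function of the LHS agrees locally with an explicit function
  have hG : (fun z => (B z) ^ p * deriv (deriv (fun w => lnp p (B w))) z)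
      =ᶠ[𝓝 y] fun z => F z ^ (1 / (p - 1) * p) * -(1 / (p * σ)) := by
    filter_upwards [h0, h4] with z hz h4z
    rw [hB z, max_eq_left hz.le, h4z, Real.rpow_mul hz.le]
  have hexp : 1 / (p - 1) * p - 1 = 1 / (p - 1) := by
    field_simp
    ring
  have hE : deriv (fun z => (B z) ^ p * deriv (deriv (fun w => lnp p (B w))) z)
      =ᶠ[𝓝 y] fun z => 1 / (p * σ ^ 2) * (z * F z ^ (1 / (p - 1))) := by
    refine hG.deriv.trans ?_
    filter_upwards [h0] with z hz
    have hd : HasDerivAt (fun w => F w ^ (1 / (p - 1) * p))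
        ((-((p - 1) / p * (2 * z ^ 1) / (2 * σ))) * (1 / (p - 1) * p) *
          F z ^ (1 / (p - 1) * p - 1)) z :=
      (hF' z).rpow_const (Or.inl hz.ne')
    rw [(hd.mul_const (-(1 / (p * σ)))).deriv, hexp]
    field_simp
  -- reduce both sides to the derivative of z * F z ^ (1/(p-1))
  have key : deriv (deriv (fun z =>
        (B z) ^ p * deriv (deriv (fun w => lnp p (B w))) z)) y
      = 1 / (p * σ ^ 2) * deriv (fun z => z * F z ^ (1 / (p - 1))) y := by
    rw [hE.deriv_eq]
    exact deriv_const_mul_field _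
  have hRB : deriv (fun z => z * B z) y
      = deriv (fun z => z * F z ^ (1 / (p - 1))) y := by
    apply Filter.EventuallyEq.deriv_eq
    filter_upwards [hBF] with z hz
    rw [hz]
  -- the Fisher information is positive
  have hI : 0 < fisherP p B := by
    by_contra h
    push_neg at h
    have h2I : (2 : ℝ) * fisherP p B ≤ 0 := by linarith
    have : Real.sqrt (2 * fisherP p B) = 0 := Real.sqrt_eq_zero'.mpr h2I
    rw [hσdef, this, mul_zero, div_zero] at hσ
    exact lt_irrefl 0 hσ
  have hIne : fisherP p B ≠ 0 := ne_of_gt hI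
  have hσsq : σ ^ 2 = Θ₀ / (2 * fisherP p B * p ^ 2) := by
    rw [hσdef, div_pow, mul_pow, Real.sq_sqrt hΘ₀.le,
      Real.sq_sqrt (by positivity : (0 : ℝ) ≤ 2 * fisherP p B)]
    ring
  have hscalar : 1 / fisherP p B * (1 / (p * σ ^ 2)) = 2 * p / Θ₀ := by
    rw [hσsq]
    field_simp
  rw [key, hRB, ← mul_assoc, hscalar]
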